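/- Let p ≥ 2 and H > 0. Then for all η ≥ 0 with 1 + ((p-1)/(pH))η > 0, the inequality (1 + ((p-1)/(pH))η)^{p/(p-1)} ≤ 1 + (1/H)η + (1/(2pH^2))η^2 holds. -/

import Mathlib

lemma taylor_aux {α : ℝ} (h1 : 1 ≤ α) (h2 : α ≤ 2) {x : ℝ} (hx : 0 ≤ x) :
    (1 + x) ^ α ≤ 1 + α * x + α * (α - 1) / 2 * x ^ 2 := by
  set f : ℝ → ℝ := fun t => 1 + α * t + α * (α - 1) / 2 * t ^ 2 - (1 + t) ^ α with hf
  have hd : ∀ t : ℝ, 0 < t →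
      HasDerivAt f (α + α * (α - 1) / 2 * (2 * t) - α * (1 + t) ^ (α - 1)) t := by
    intro t ht
    have h1t : (0:ℝ) < 1 + t := by linarith
    have hbase : HasDerivAt (fun t : ℝ => 1 + t) 1 t := (hasDerivAt_id t).const_add 1
    have hr : HasDerivAt (fun t : ℝ => (1 + t) ^ α) (1 * α * (1 + t) ^ (α - 1)) t :=
      hbase.rpow_const (Or.inl (ne_of_gt h1t))
    have hpoly : HasDerivAt (fun t : ℝ => 1 + α * t + α * (α - 1) / 2 * t ^ 2)
        (α * 1 + α * (α - 1) / 2 * (2 * t)) t := by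
      have := ((hasDerivAt_id t).const_mul α).const_add 1
      have h2' := (hasDerivAt_pow 2 t).const_mul (α * (α - 1) / 2)
      exact (this.add h2').congr_deriv (by norm_num)
    have := hpoly.sub hr
    exact this.congr_deriv (by ring)
  have hmono : MonotoneOn f (Set.Ici (0:ℝ)) := by
    apply monotoneOn_of_deriv_nonneg (convex_Ici 0)
    · apply ContinuousOn.sub
      · fun_prop
      · apply ContinuousOn.rpow_const (by fun_prop)
        intro t ht
        simp only [Set.mem_Ici] at ht
        exact Or.inl (by positivity)
    · intro t ht
      rw [interior_Ici] at ht
      exact (hd t ht).differentiableAt.differentiableWithinAt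
    · intro t ht
      rw [interior_Ici] at ht
      rw [(hd t ht).deriv]
      have ht' : 0 < t := ht
      have hb : (1 + t) ^ (α - 1) ≤ 1 + (α - 1) * t :=
        rpow_one_add_le_one_add_mul_self (by linarith) (by linarith) (by linarith)
      nlinarith [hb, ht'.le, sub_nonneg.2 h1]
  have h0 : f 0 = 0 := by simp [hf, Real.one_rpow]
  have := hmono (Set.self_mem_Ici) (Set.mem_Ici.mpr hx) hx
  rw [h0] at this
  simp only [hf] at this
  linarith

theorem taylor_bound_g (p H : ℝ) (hp : 2 ≤ p) (hH : 0 < H) :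
    ∀ η : ℝ, 0 ≤ η → 0 < 1 + ((p - 1) / (p * H)) * η →
      (1 + ((p - 1) / (p * H)) * η) ^ (p / (p - 1)) ≤
        1 + (1 / H) * η + (1 / (2 * p * H ^ 2)) * η ^ 2 := by
  intro η hη hpos
  have hp0 : (0:ℝ) < p := by linarith
  have hp1 : (0:ℝ) < p - 1 := by linarith
  set α := p / (p - 1) with hα
  set x := ((p - 1) / (p * H)) * η with hx
  have h1 : 1 ≤ α := by
    rw [hα, le_div_iff₀ hp1]; linarith
  have h2 : α ≤ 2 := by
    rw [hα, div_le_iff₀ hp1]; linarith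
  have hx0 : 0 ≤ x := by
    apply mul_nonneg (div_nonneg hp1.le (by positivity)) hη
  have key := taylor_aux h1 h2 hx0
  have e1 : α * x = (1 / H) * η := by
    rw [hα, hx]; field_simp
  have e2 : α * (α - 1) / 2 * x ^ 2 = (1 / (2 * p * H ^ 2)) * η ^ 2 := by
    rw [hα, hx]; field_simp; ring
  rw [e1, e2] at key
  exact key
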